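/- Let (x_n) be a nonincreasing sequence of positive reals with ∑_n x_n < ∞, and suppose ∑_{k>n} x_k ≥ x_n for every n ≥ 1. Then the set { ∑_n ε_n x_n : (ε_n) ∈ {0,1}^ℕ } equals the closed interval [0, ∑_n x_n]. -/
import Mathlib


open scoped Classical

private noncomputable def greedy (x : ℕ → ℝ) (y : ℝ) : ℕ → ℝ
  | 0 => 0
  | n + 1 => greedy x y n + if greedy x y n + x n ≤ y then x n else 0

private lemma greedy_zero (x : ℕ → ℝ) (y : ℝ) : greedy x y 0 = 0 := by simp [greedy]

/-- Kakeya's criterion: if `(x_n)` is nonincreasing, positive, summable and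
`∑_{k>n} x_k ≥ x_n` for every `n`, then the achievement set of subseries sums
is the full interval `[0, ∑_n x_n]`. -/
theorem stmt_19 (x : ℕ → ℝ) (hpos : ∀ n, 0 < x n)
    (hmono : ∀ n, x (n + 1) ≤ x n) (hsum : Summable x)
    (htail : ∀ n, x n ≤ ∑' k : ℕ, x (n + 1 + k)) :
    {y : ℝ | ∃ ε : ℕ → Bool, y = ∑' n : ℕ, (if ε n then x n else 0)}
      = Set.Icc 0 (∑' n : ℕ, x n) := by
  ext y
  simp only [Set.mem_setOf_eq, Set.mem_Icc]
  constructor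
  · rintro ⟨ε, rfl⟩
    have hs : Summable (fun n => if ε n then x n else 0) :=
      Summable.of_nonneg_of_le (fun n => by by_cases h : ε n <;> simp [h, (hpos n).le])
        (fun n => by by_cases h : ε n <;> simp [h, (hpos n).le]) hsum
    refine ⟨tsum_nonneg fun n => ?_, Summable.tsum_le_tsum (fun n => ?_) hs hsum⟩
    · by_cases h : ε n <;> simp [h, (hpos n).le]
    · by_cases h : ε n <;> simp [h, (hpos n).le]
  · rintro ⟨hy0, hyS⟩
    set s := greedy x y with hsdef
    have hstep : ∀ n, s (n + 1) = s n + if s n + x n ≤ y then x n else 0 := fun n => rfl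
    refine ⟨fun n => decide (s n + x n ≤ y), ?_⟩
    have hεx : ∀ n, (if decide (s n + x n ≤ y) then x n else 0)
        = (if s n + x n ≤ y then x n else 0) := by
      intro n; simp
    have hsummable : Summable (fun n => if decide (s n + x n ≤ y) then x n else 0) :=
      Summable.of_nonneg_of_le
        (fun n => by by_cases h : s n + x n ≤ y <;> simp [h, (hpos n).le])
        (fun n => by by_cases h : s n + x n ≤ y <;> simp [h, (hpos n).le]) hsum
    have hpartial : ∀ n,
        ∑ k ∈ Finset.range n, (if decide (s k + x k ≤ y) then x k else 0) = s n := by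
      intro n
      induction n with
      | zero => simp [hsdef, greedy_zero]
      | succ n ih => rw [Finset.sum_range_succ, ih, hεx, ← hstep]
    have hle : ∀ n, s n ≤ y := by
      intro n
      induction n with
      | zero => simpa [hsdef, greedy_zero] using hy0
      | succ n ih =>
        rw [hstep]
        by_cases h : s n + x n ≤ y <;> simp [h] <;> linarith
    set T := fun n => ∑' k, x (k + n) with hTdef
    have hTsum : ∀ n, Summable fun k => x (k + n) := fun n => (summable_nat_add_iff n).2 hsum
    have hTsplit : ∀ n, T n = x n + T (n + 1) := by
      intro n
      have := Summable.tsum_eq_zero_add (f := fun k => x (k + n)) (hTsum n)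
      simp only [hTdef, zero_add] at this ⊢
      rw [this]
      congr 1
      exact tsum_congr fun k => by ring_nf
    have hTtail : ∀ n, x n ≤ T (n + 1) := by
      intro n
      have h := htail n
      calc x n ≤ ∑' k, x (n + 1 + k) := h
        _ = T (n + 1) := tsum_congr fun k => by rw [add_comm (n + 1) k]
    have hge : ∀ n, y ≤ s n + T n := by
      intro n
      induction n with
      | zero =>
        have : T 0 = ∑' n, x n := tsum_congr fun k => by simp
        simp [hsdef, greedy_zero, this, hyS]
      | succ n ih =>
        rw [hstep]
        by_cases h : s n + x n ≤ y
        · simp only [if_pos h]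
          have := hTsplit n
          linarith
        · simp only [if_neg h]
          have := hTtail n
          linarith
    have hT0 : Filter.Tendsto T Filter.atTop (nhds 0) := tendsto_sum_nat_add x
    have hTend : Filter.Tendsto s Filter.atTop (nhds y) := by
      have h1 : Filter.Tendsto (fun n => y - T n) Filter.atTop (nhds y) := by
        simpa using Filter.Tendsto.sub (tendsto_const_nhds (x := y)) hT0
      exact tendsto_of_tendsto_of_tendsto_of_le_of_le h1 tendsto_const_nhds
        (fun n => by have := hge n; linarith) hle
    have h2 : Filter.Tendsto (fun n => ∑ k ∈ Finset.range n,
        (if decide (s k + x k ≤ y) then x k else 0)) Filter.atTop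
        (nhds (∑' n, if decide (s n + x n ≤ y) then x n else 0)) :=
      hsummable.hasSum.tendsto_sum_nat
    rw [funext hpartial] at h2
    exact (tendsto_nhds_unique h2 hTend).symm
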